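/- Let F be a unital C*-algebra and C = C* ⊂ F a constraint set. The set of Dirac states S_D = {ω state on F : ω(C*C) = 0 ∀ C ∈ C} is nonempty if and only if the identity 1 does not belong to the closed left ideal N generated by C in F. -/

import Mathlib

/-! Auxiliary lemmas for the Dirac state theorem. -/

lemma dirac_real_aux {c v d : ℝ} (h : ∀ t : ℝ, c + v * t ≤ d) : v = 0 := by
  by_contra hv
  have h2 : v * ((d - c + 1) / v) = d - c + 1 := by field_simp
  have := h ((d - c + 1) / v)
  rw [h2] at this
  linarith

lemma dirac_caux {A u : ℂ} (h : ∀ s : ℝ, ∃ r : ℝ, 0 ≤ r ∧ A + s * u = r) : u = 0 := by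
  obtain ⟨r0, hr0, h0⟩ := h 0
  obtain ⟨r1, hr1, h1⟩ := h 1
  have hA : A = (r0 : ℂ) := by simpa using h0
  have hu : u = (r1 : ℂ) - r0 := by
    have h1' : A + u = (r1 : ℂ) := by simpa using h1
    linear_combination h1' - hA
  by_contra huz
  have hv : r1 - r0 ≠ 0 := by
    intro hz
    apply huz
    rw [hu]
    have : (r1 : ℂ) = (r0 : ℂ) := by exact_mod_cast congrArg (Complex.ofReal) (by linarith : r1 = r0)
    rw [this]; ring
  set s : ℝ := -(r0 + 1) / (r1 - r0) with hs_def
  have hs : s * (r1 - r0) = -(r0 + 1) := div_mul_cancel₀ _ hv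
  have hsC : (s : ℂ) * ((r1 : ℂ) - r0) = -((r0 : ℂ) + 1) := by
    have := congrArg (Complex.ofReal) hs
    push_cast at this
    exact this
  obtain ⟨r, hr, hrr⟩ := h s
  rw [hA, hu] at hrr
  have : ((-1 : ℝ) : ℂ) = (r : ℂ) := by
    push_cast
    linear_combination hrr - hsC
  have := Complex.ofReal_inj.mp this
  linarith

section DiracAux

variable {F : Type*} [NormedRing F] [StarRing F] [CStarRing F]
    [NormedAlgebra ℂ F] [StarModule ℂ F] [CompleteSpace F]

set_option linter.unusedSectionVars false

/-- Expansion of a "quadratic form" under a linear functional. -/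
lemma dirac_expand (ω : F →ₗ[ℂ] ℂ) (x y : F) (t : ℂ) :
    ω (star (x + t • y) * (x + t • y)) =
      ω (star x * x) + t * ω (star x * y) + star t * ω (star y * x) +
        (star t * t) * ω (star y * y) := by
  have : star (x + t • y) * (x + t • y) =
      star x * x + t • (star x * y) + (star t) • (star y * x) +
        ((star t) * t) • (star y * y) := by
    simp only [star_add, star_smul, add_mul, mul_add, smul_mul_assoc, mul_smul_comm, smul_smul]
    module
  rw [this]
  simp only [map_add, map_smul, smul_eq_mul]

/-- If a set is stable under left multiplication and contains an element at distance
less than one from the identity, it contains the identity. -/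
lemma dirac_one_mem {P : Set F} (hP : ∀ b : F, ∀ z ∈ P, b * z ∈ P)
    {x : F} (hx : x ∈ P) (hlt : ‖1 - x‖ < 1) : (1 : F) ∈ P := by
  let u : Fˣ := Units.oneSub (1 - x) hlt
  have hu : (u : F) = x := by
    show 1 - (1 - x) = x
    exact sub_sub_cancel 1 x
  have : ((u⁻¹ : Fˣ) : F) * x = 1 := by rw [← hu]; exact u.inv_mul
  rw [← this]
  exact hP _ _ hx

/-- A norm-one unital functional is positive. -/
lemma dirac_pos_aux (φ : F →ₗ[ℂ] ℂ) (h1 : φ 1 = 1) (hb : ∀ x : F, ‖φ x‖ ≤ ‖x‖) (a : F) :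
    ∃ r : ℝ, 0 ≤ r ∧ φ (star a * a) = (r : ℂ) := by
  have hnt : Nontrivial F := by
    rcases subsingleton_or_nontrivial F with h | h
    · exfalso
      have : (1 : F) = 0 := Subsingleton.elim _ _
      rw [this, map_zero] at h1
      exact one_ne_zero h1.symm
    · exact h
  letI : CStarAlgebra F :=
    { toNormedRing := ‹_›, toStarRing := ‹_›, toCompleteSpace := ‹_›, toCStarRing := ‹_›,
      toNormedAlgebra := ‹_›, toStarModule := ‹_› }
  set b : F := star a * a with hb_def
  have hbsa : IsSelfAdjoint b := IsSelfAdjoint.star_mul_self a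
  set u : ℝ := (φ b).re with hu_def
  set v : ℝ := (φ b).im with hv_def
  -- Step 1 : the imaginary part vanishes
  have key : ∀ t : ℝ, u ^ 2 + (v + t) ^ 2 ≤ ‖b‖ ^ 2 + t ^ 2 := by
    intro t
    set sc : ℂ := (t : ℂ) * Complex.I with hsc
    have e1 : φ (b + sc • 1) = φ b + sc := by
      rw [map_add, map_smul, h1, smul_eq_mul, mul_one]
    have estar : star (b + sc • 1) = b - sc • 1 := by
      rw [star_add, star_smul, star_one, hbsa.star_eq, hsc]
      simp [Complex.conj_I, sub_eq_add_neg]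
    have e3 : star (b + sc • 1) * (b + sc • 1) = b * b + ((t : ℂ) ^ 2) • 1 := by
      rw [estar]
      have : (b - sc • 1) * (b + sc • 1) = b * b - (sc * sc) • 1 := by
        simp only [mul_add, sub_mul, smul_mul_assoc, mul_smul_comm, smul_smul, mul_one, one_mul]
        module
      rw [this, hsc]
      have : -(((t : ℂ) * Complex.I) * ((t : ℂ) * Complex.I)) = (t : ℂ) ^ 2 := by
        rw [mul_mul_mul_comm, Complex.I_mul_I]; ring
      rw [sub_eq_add_neg, ← neg_smul, this]
    have hnorm_sq : ‖b + sc • 1‖ ^ 2 ≤ ‖b‖ ^ 2 + t ^ 2 := by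
      have := CStarRing.norm_star_mul_self (x := b + sc • 1)
      calc ‖b + sc • 1‖ ^ 2 = ‖star (b + sc • 1) * (b + sc • 1)‖ := by rw [this]; ring
        _ = ‖b * b + ((t : ℂ) ^ 2) • 1‖ := by rw [e3]
        _ ≤ ‖b * b‖ + ‖((t : ℂ) ^ 2) • 1‖ := norm_add_le _ _
        _ ≤ ‖b‖ ^ 2 + t ^ 2 := by
            have h1' : ‖b * b‖ = ‖b‖ ^ 2 := by
              have := CStarRing.norm_star_mul_self (x := b)
              rw [hbsa.star_eq] at this; rw [this]; ring
            have h2' : ‖((t : ℂ) ^ 2) • (1 : F)‖ = t ^ 2 := by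
              rw [norm_smul, norm_one, mul_one]
              rw [norm_pow, Complex.norm_real, Real.norm_eq_abs, sq_abs]
            rw [h1', h2']
    have hlhs : ‖φ (b + sc • 1)‖ ^ 2 = u ^ 2 + (v + t) ^ 2 := by
      rw [e1, Complex.sq_norm, Complex.normSq_apply]
      simp [hsc]
      ring
    have hchain : ‖φ (b + sc • 1)‖ ^ 2 ≤ ‖b + sc • 1‖ ^ 2 :=
      pow_le_pow_left₀ (norm_nonneg _) (hb _) 2
    calc u ^ 2 + (v + t) ^ 2 = ‖φ (b + sc • 1)‖ ^ 2 := hlhs.symm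
      _ ≤ ‖b + sc • 1‖ ^ 2 := hchain
      _ ≤ ‖b‖ ^ 2 + t ^ 2 := hnorm_sq
  have hv0 : v = 0 := by
    have : ∀ t : ℝ, (u ^ 2 + v ^ 2) + (2 * v) * t ≤ ‖b‖ ^ 2 := by
      intro t
      nlinarith [key t]
    have := dirac_real_aux this
    linarith
  have hφb : φ b = (u : ℂ) := by
    apply Complex.ext
    · simp [hu_def]
    · simp only [Complex.ofReal_im]
      rw [← hv_def]
      exact hv0
  -- Step 2 : nonnegativity
  letI : PartialOrder F := CStarAlgebra.spectralOrder F
  letI : StarOrderedRing F := CStarAlgebra.spectralOrderedRing F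
  have hb0 : (0 : F) ≤ b := star_mul_self_nonneg a
  have hble : b ≤ algebraMap ℝ F ‖b‖ := hbsa.le_algebraMap_norm_self
  set hh : F := algebraMap ℝ F ‖b‖ - b with hh_def
  have hh0 : (0 : F) ≤ hh := sub_nonneg.mpr hble
  have hhle : hh ≤ algebraMap ℝ F ‖b‖ := sub_le_self _ hb0
  have hnh : ‖hh‖ ≤ ‖b‖ :=
    (CStarAlgebra.norm_le_iff_le_algebraMap hh (norm_nonneg b) hh0).mpr hhle
  have hφalg : ∀ r : ℝ, φ (algebraMap ℝ F r) = (r : ℂ) := by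
    intro r
    rw [IsScalarTower.algebraMap_apply ℝ ℂ F, Algebra.algebraMap_eq_smul_one, map_smul,
      h1, smul_eq_mul, mul_one]
    norm_num
  have hφh : φ hh = ((‖b‖ - u : ℝ) : ℂ) := by
    rw [hh_def, map_sub, hφalg, hφb]
    push_cast; ring
  have habs : |‖b‖ - u| ≤ ‖b‖ := by
    have := hb hh
    rw [hφh] at this
    rw [Complex.norm_real] at this
    simpa [Real.norm_eq_abs] using this.trans hnh
  refine ⟨u, ?_, hφb⟩
  have := (abs_le.mp habs).2
  linarith

end DiracAux

/-- A state on a unital C*-algebra: a normalized positive linear functional. -/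
def IsState {F : Type*} [NormedRing F] [StarRing F] [NormedAlgebra ℂ F]
    (ω : F →ₗ[ℂ] ℂ) : Prop :=
  ω 1 = 1 ∧ ∀ a : F, ∃ r : ℝ, 0 ≤ r ∧ ω (star a * a) = (r : ℂ)

/-- For a self-adjoint constraint set `C = C*` in a unital C*-algebra `F`, the set of
Dirac states `{ω : ω (c* c) = 0 ∀ c ∈ C}` is nonempty iff the identity does not belong to
the closed left ideal `N = [F C]` generated by `C`. -/
theorem stmt_3 {F : Type*} [NormedRing F] [StarRing F] [CStarRing F]
    [NormedAlgebra ℂ F] [StarModule ℂ F] [CompleteSpace F]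
    (C : Set F) (hC : ∀ c ∈ C, star c ∈ C) :
    (∃ ω : F →ₗ[ℂ] ℂ, IsState ω ∧ ∀ c ∈ C, ω (star c * c) = 0) ↔
      (1 : F) ∉ closure ((Submodule.span ℂ {x : F | ∃ a : F, ∃ c ∈ C, x = a * c} : Submodule ℂ F) : Set F) := by
  set S : Set F := {x : F | ∃ a : F, ∃ c ∈ C, x = a * c} with hS_def
  set M : Submodule ℂ F := Submodule.span ℂ S with hM_def
  -- M is a left ideal
  have hLI : ∀ b : F, ∀ z ∈ M, b * z ∈ M := by
    intro b z hz
    induction hz using Submodule.span_induction with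
    | mem w hw =>
      obtain ⟨a, c, hc, rfl⟩ := hw
      exact Submodule.subset_span ⟨b * a, c, hc, by rw [mul_assoc]⟩
    | zero => rw [mul_zero]; exact Submodule.zero_mem M
    | add w₁ w₂ _ _ h₁ h₂ => rw [mul_add]; exact Submodule.add_mem M h₁ h₂
    | smul r w _ hw => rw [mul_smul_comm]; exact Submodule.smul_mem M r hw
  have hccM : ∀ c ∈ C, star c * c ∈ M := fun c hc =>
    Submodule.subset_span ⟨star c, c, hc, rfl⟩
  constructor
  · -- Dirac state exists → 1 ∉ closure M
    rintro ⟨ω, ⟨hω1, hωpos⟩, hdirac⟩ hmem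
    -- ω vanishes on products a * c
    have hac : ∀ (a c : F), c ∈ C → ω (a * c) = 0 := by
      intro a c hc
      set x : F := star a with hx_def
      set y : F := c with hy_def
      have hyy : ω (star y * y) = 0 := hdirac c hc
      set α : ℂ := ω (star x * y) with hα_def
      set β : ℂ := ω (star y * x) with hβ_def
      have hsum : α + β = 0 := by
        apply dirac_caux (A := ω (star x * x))
        intro s
        obtain ⟨r, hr, hre⟩ := hωpos (x + (s : ℂ) • y)
        refine ⟨r, hr, ?_⟩
        rw [dirac_expand] at hre
        simp only [Complex.star_def, Complex.conj_ofReal, hyy, mul_zero, add_zero] at hre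
        rw [← hα_def, ← hβ_def] at hre
        linear_combination hre
      have hdiff : Complex.I * α - Complex.I * β = 0 := by
        apply dirac_caux (A := ω (star x * x))
        intro s
        obtain ⟨r, hr, hre⟩ := hωpos (x + ((s : ℂ) * Complex.I) • y)
        refine ⟨r, hr, ?_⟩
        rw [dirac_expand] at hre
        simp only [Complex.star_def, map_mul, Complex.conj_ofReal, Complex.conj_I, hyy,
          mul_zero, add_zero] at hre
        rw [← hα_def, ← hβ_def] at hre
        linear_combination hre
      have hαβ : α = β := by
        have : Complex.I * (α - β) = 0 := by linear_combination hdiff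
        rcases mul_eq_zero.mp this with h | h
        · exact absurd h Complex.I_ne_zero
        · exact sub_eq_zero.mp h
      have hα0 : α = 0 := by
        have : α + α = 0 := by rw [hαβ] at hsum ⊢; exact hsum
        linear_combination this / 2
      have : star x * y = a * c := by rw [hx_def, star_star]
      rw [← this]
      exact hα0
    -- ω vanishes on M
    have hvanish : ∀ z ∈ M, ω z = 0 := by
      intro z hz
      induction hz using Submodule.span_induction with
      | mem w hw =>
        obtain ⟨a, c, hc, rfl⟩ := hw
        exact hac a c hc
      | zero => exact map_zero ω
      | add w₁ w₂ _ _ h₁ h₂ => rw [map_add, h₁, h₂, add_zero]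
      | smul r w _ hw => rw [map_smul, hw, smul_zero]
    -- 1 ∈ closure M gives an invertible element of M, hence 1 ∈ M
    obtain ⟨x, hxM, hx1⟩ : ∃ x ∈ (M : Set F), dist (1 : F) x < 1 :=
      Metric.mem_closure_iff.mp hmem 1 one_pos
    rw [dist_eq_norm] at hx1
    have h1M : (1 : F) ∈ (M : Set F) := dirac_one_mem (fun b z hz => hLI b z hz) hxM hx1
    have := hvanish 1 h1M
    rw [hω1] at this
    exact one_ne_zero this
  · -- 1 ∉ closure M → Dirac state exists
    intro h1N
    set Nsub : Submodule ℂ F := M.topologicalClosure with hN_def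
    have hNcoe : (Nsub : Set F) = closure (M : Set F) := rfl
    have h1N' : (1 : F) ∉ Nsub := fun h => h1N (hNcoe ▸ h)
    haveI : IsClosed (Nsub : Set F) := Submodule.isClosed_topologicalClosure M
    -- the quotient map
    have hy0 : Nsub.mkQ 1 ≠ 0 := by
      rw [Submodule.mkQ_apply, Ne, Submodule.Quotient.mk_eq_zero]
      exact h1N'
    -- left-multiplication stability of the closure
    have hLIN : ∀ b : F, ∀ z ∈ (Nsub : Set F), b * z ∈ (Nsub : Set F) := by
      intro b z hz
      rw [hNcoe] at hz ⊢
      exact map_mem_closure (continuous_const.mul continuous_id) hz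
        (fun w hw => hLI b w hw)
    -- the quotient norm of the image of 1 is at least 1
    have hy1 : 1 ≤ ‖Nsub.mkQ 1‖ := by
      by_contra hlt
      push_neg at hlt
      obtain ⟨m, hm, hmn⟩ :=
        Submodule.Quotient.norm_mk_lt (Nsub.mkQ (1 : F)) (ε := 1 - ‖Nsub.mkQ 1‖) (by linarith)
      have hmem : (1 : F) - m ∈ Nsub := by
        have : m - 1 ∈ Nsub := (Submodule.Quotient.eq Nsub).mp (by rw [hm, Submodule.mkQ_apply])
        simpa [neg_sub] using Nsub.neg_mem this
      have hmlt : ‖(1 : F) - ((1 : F) - m)‖ < 1 := by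
        simp only [sub_sub_cancel]
        linarith
      exact h1N' (dirac_one_mem hLIN hmem hmlt)
    have hyne : (‖Nsub.mkQ 1‖ : ℂ) ≠ 0 := by
      simp only [Ne, Complex.ofReal_eq_zero]
      intro h; rw [h] at hy1; linarith
    -- dual vector on the quotient
    obtain ⟨g, hg, hgy⟩ := exists_dual_vector ℂ (Nsub.mkQ 1) (by intro h; rw [h] at hy1; linarith)
    set ω : F →ₗ[ℂ] ℂ :=
      ((‖Nsub.mkQ 1‖ : ℂ))⁻¹ • ((g : (F ⧸ Nsub) →ₗ[ℂ] ℂ) ∘ₗ Nsub.mkQ) with hω_def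
    have hωapp : ∀ x : F, ω x = ((‖Nsub.mkQ 1‖ : ℂ))⁻¹ * g (Nsub.mkQ x) := by
      intro x; rfl
    have hω1 : ω 1 = 1 := by
      rw [hωapp, hgy]
      exact inv_mul_cancel₀ hyne
    have hbound : ∀ x : F, ‖ω x‖ ≤ ‖x‖ := by
      intro x
      rw [hωapp, norm_mul]
      have h1' : ‖((‖Nsub.mkQ 1‖ : ℂ))⁻¹‖ = ‖Nsub.mkQ 1‖⁻¹ := by
        rw [norm_inv, Complex.norm_real, Real.norm_eq_abs, abs_of_pos (by linarith)]
      have h2' : ‖g (Nsub.mkQ x)‖ ≤ ‖Nsub.mkQ x‖ := by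
        calc ‖g (Nsub.mkQ x)‖ ≤ ‖g‖ * ‖Nsub.mkQ x‖ := g.le_opNorm _
          _ = ‖Nsub.mkQ x‖ := by rw [hg, one_mul]
      have h3' : ‖Nsub.mkQ x‖ ≤ ‖x‖ := Submodule.Quotient.norm_mk_le Nsub x
      have h4' : ‖Nsub.mkQ 1‖⁻¹ ≤ 1 := by
        rw [inv_le_one_iff₀]; right; exact hy1
      calc ‖((‖Nsub.mkQ 1‖ : ℂ))⁻¹‖ * ‖g (Nsub.mkQ x)‖
          ≤ 1 * ‖x‖ := by
            rw [h1']
            exact mul_le_mul h4' (h2'.trans h3') (norm_nonneg _) zero_le_one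
        _ = ‖x‖ := one_mul _
    refine ⟨ω, ⟨hω1, fun a => dirac_pos_aux ω hω1 hbound a⟩, fun c hc => ?_⟩
    have hmem : star c * c ∈ Nsub := Submodule.le_topologicalClosure M (hccM c hc)
    rw [hωapp]
    have : Nsub.mkQ (star c * c) = 0 := by
      rw [Submodule.mkQ_apply, Submodule.Quotient.mk_eq_zero]
      exact hmem
    rw [this, map_zero, mul_zero]
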